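/- Let p and q be real polynomials with deg q < deg p. If p has at least one non-real zero, then there exists ε > 0 such that for every real b with |b| < ε, the polynomial p + b·q has at least one non-real zero. -/

import Mathlib

open Polynomial

lemma pow_card_le_prod_abs (z : ℂ) (s : Multiset ℂ) (c : ℝ) (hc : 0 ≤ c)
    (h : ∀ r ∈ s, c ≤ ‖z - r‖) :
    c ^ Multiset.card s ≤ (s.map fun r => ‖z - r‖).prod := by
  induction s using Multiset.induction with
  | empty => simp
  | cons a s ih =>
      simp only [Multiset.map_cons, Multiset.prod_cons, Multiset.card_cons, pow_succ]
      rw [mul_comm]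
      exact mul_le_mul (h a (Multiset.mem_cons_self a s))
        (ih fun r hr => h r (Multiset.mem_cons_of_mem hr))
        (pow_nonneg hc _) (norm_nonneg _)

/-- If `p` has a non-real zero and `deg q < deg p`, then small perturbations
`p + b q` still have a non-real zero. -/
theorem perturbation_nonreal_root (p q : Polynomial ℝ) (hdeg : q.degree < p.degree)
    (hp : ∃ z : ℂ, Polynomial.aeval z p = 0 ∧ z.im ≠ 0) :
    ∃ ε > 0, ∀ b : ℝ, |b| < ε →
      ∃ z : ℂ, Polynomial.aeval z (p + C b * q) = 0 ∧ z.im ≠ 0 := by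
  obtain ⟨z, hz0, hzim⟩ := hp
  have hp0 : p ≠ 0 := by
    rintro rfl
    simp at hdeg
  have hL : 0 < |p.leadingCoeff| := abs_pos.mpr (leadingCoeff_ne_zero.mpr hp0)
  have him : 0 < |z.im| := abs_pos.mpr hzim
  set A : ℝ := ‖Polynomial.aeval z q‖ with hA
  set ε : ℝ := |p.leadingCoeff| * |z.im| ^ p.natDegree / (A + 1) with hε
  have hApos : 0 < A + 1 := by positivity
  have hεpos : 0 < ε := by positivity
  refine ⟨ε, hεpos, fun b hb => ?_⟩
  by_contra hcon
  push_neg at hcon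
  -- the perturbed polynomial, over ℂ
  set P : Polynomial ℝ := p + C b * q with hP
  have hdegCbq : (C b * q).degree < p.degree :=
    lt_of_le_of_lt (le_trans (degree_mul_le _ _)
      (by simpa using add_le_add degree_C_le (le_refl q.degree))) hdeg
  have hPdeg : P.degree = p.degree := by
    rw [hP, add_comm]
    exact degree_add_eq_right_of_degree_lt hdegCbq
  have hPlead : P.leadingCoeff = p.leadingCoeff := by
    rw [hP]
    exact leadingCoeff_add_of_degree_lt' hdegCbq
  have hP0 : P ≠ 0 := fun h => by
    rw [h, degree_zero] at hPdeg
    exact hp0 (degree_eq_bot.mp hPdeg.symm)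
  set f : Polynomial ℂ := P.map (algebraMap ℝ ℂ) with hf
  have hf0 : f ≠ 0 := (Polynomial.map_ne_zero_iff (algebraMap ℝ ℂ).injective).mpr hP0
  have hsplit : Splits f := IsAlgClosed.splits f
  -- all roots of f are real
  have hroots : ∀ r ∈ f.roots, r.im = 0 := by
    intro r hr
    refine hcon r ?_
    have h2 : f.eval r = 0 := (mem_roots hf0).mp hr
    rwa [hf, eval_map, ← aeval_def] at h2
  -- lower bound on |f.eval z|
  have hcard : Multiset.card f.roots = p.natDegree := by
    have h1 : P.natDegree = Multiset.card (P.map (algebraMap ℝ ℂ)).roots :=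
      natDegree_map (algebraMap ℝ ℂ) (p := P) ▸
        (IsAlgClosed.splits (P.map (algebraMap ℝ ℂ))).natDegree_eq_card_roots
    rw [hf, ← h1]
    exact natDegree_eq_of_degree_eq hPdeg
  have hfactor : f = C f.leadingCoeff * (f.roots.map fun a => X - C a).prod :=
    hsplit.eq_prod_roots
  have hflead : ‖f.leadingCoeff‖ = |p.leadingCoeff| := by
    rw [hf, leadingCoeff_map_of_injective (algebraMap ℝ ℂ).injective, hPlead]
    exact Complex.norm_real _
  have hlow : |p.leadingCoeff| * |z.im| ^ p.natDegree ≤ ‖f.eval z‖ := by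
    conv_rhs => rw [hfactor]
    rw [eval_mul, eval_C, norm_mul, eval_multiset_prod, Multiset.map_map,
      (show ∀ m : Multiset ℂ, ‖m.prod‖ = (m.map fun x => ‖x‖).prod from
        fun m => map_multiset_prod (normHom : ℂ →*₀ ℝ) m), Multiset.map_map, hflead]
    refine mul_le_mul_of_nonneg_left ?_ (le_of_lt hL)
    have h2 := pow_card_le_prod_abs z f.roots |z.im| (abs_nonneg _) (fun r hr => by
      have hr0 : r.im = 0 := hroots r hr
      have h3 : |(z - r).im| ≤ ‖z - r‖ := Complex.abs_im_le_norm _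
      simpa [Complex.sub_im, hr0] using h3)
    rw [hcard] at h2
    simpa [Function.comp_def] using h2
  -- upper bound on |f.eval z|
  have hfeval : f.eval z = (b : ℂ) * Polynomial.aeval z q := by
    rw [hf, eval_map, ← aeval_def, hP, map_add, map_mul, aeval_C, hz0, zero_add]
    rfl
  have hup : ‖f.eval z‖ < |p.leadingCoeff| * |z.im| ^ p.natDegree := by
    rw [hfeval, norm_mul, Complex.norm_real, Real.norm_eq_abs]
    calc |b| * A ≤ |b| * (A + 1) := by
          exact mul_le_mul_of_nonneg_left (by linarith) (abs_nonneg b)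
      _ < ε * (A + 1) := by
          exact mul_lt_mul_of_pos_right hb hApos
      _ = |p.leadingCoeff| * |z.im| ^ p.natDegree := by
          rw [hε]; field_simp
  exact absurd hlow (not_le.mpr hup)
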